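/- Let L be a Leibniz algebra and a(z), b(z), c(z) pairwise mutually local formal distributions over L. Then for every n ∈ ℤ₊ the pairs ((a₍ₙ₎b)(z), c(z)) and (a(z), (b₍ₙ₎c)(z)) are local. -/

import Mathlib

open Finset

/-! ### Auxiliary binomial expansions in a commutative ring -/

theorem aux_zsub_pow {R : Type*} [CommRing R] (x y : R) (n : ℕ) :
    (x - y) ^ n = ∑ i ∈ range (n + 1),
      ((-1) ^ i * (n.choose i) : ℤ) • (x ^ (n - i) * y ^ i) := by
  rw [sub_pow, ← Finset.sum_range_reflect]
  refine Finset.sum_congr rfl fun i hi => ?_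
  rw [Finset.mem_range] at hi
  rw [show n + 1 - 1 - i = n - i by omega]
  rw [show n - (n - i) = i by omega, Nat.choose_symm (by omega)]
  rw [show (-1 : R) ^ (n - i + n) = (-1) ^ i by
    rw [show n - i + n = i + 2 * (n - i) by omega, pow_add, pow_mul]; simp]
  rw [zsmul_eq_mul]
  push_cast
  ring

theorem aux_zadd_pow {R : Type*} [CommRing R] (x y : R) (n : ℕ) :
    (x + y) ^ n = ∑ i ∈ range (n + 1),
      ((n.choose i) : ℤ) • (x ^ (n - i) * y ^ i) := by
  rw [add_pow, ← Finset.sum_range_reflect]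
  refine Finset.sum_congr rfl fun i hi => ?_
  rw [Finset.mem_range] at hi
  rw [show n + 1 - 1 - i = n - i by omega]
  rw [show n - (n - i) = i by omega, Nat.choose_symm (by omega)]
  rw [zsmul_eq_mul]
  push_cast
  ring

/-! ### Acting on an abelian group through a ring hom into its endomorphism ring -/

theorem phi_kill {R M : Type*} [CommRing R] [AddCommGroup M]
    (φ : R →+* AddMonoid.End M) (x y : R) (m : M) (h : φ y m = 0) :
    φ (x * y) m = 0 := by
  rw [map_mul]; show φ x (φ y m) = 0; rw [h]; exact map_zero _

theorem phi_sum {R M : Type*} [CommRing R] [AddCommGroup M]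
    (φ : R →+* AddMonoid.End M) {ι : Type*} (s : Finset ι) (f : ι → R) (m : M) :
    φ (∑ i ∈ s, f i) m = ∑ i ∈ s, φ (f i) m := by
  rw [map_sum]; exact AddMonoidHom.finset_sum_apply _ s m

theorem phi_zsmul {R M : Type*} [CommRing R] [AddCommGroup M]
    (φ : R →+* AddMonoid.End M) (z : ℤ) (x : R) (m : M) :
    φ (z • x) m = z • φ x m := by
  rw [map_zsmul]; exact AddMonoidHom.smul_apply z _ m

theorem pow_extract {R : Type*} [Monoid R] (x : R) {e N : ℕ} (h : N ≤ e) :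
    x ^ e = x ^ (e - N) * x ^ N := by
  rw [← pow_add]; congr 1; omega

/-- The abstract core of the Dong lemma, in a commutative ring acting on an
abelian group. -/
theorem dong_core {R M : Type*} [CommRing R] [AddCommGroup M]
    (φ : R →+* AddMonoid.End M) (u v : R) (N : ℕ) (A B C : M)
    (hA : φ (u ^ N) A = 0) (hB : φ (v ^ N) B = 0) (hC : φ ((u + v) ^ N) C = 0)
    (hABC : A = B - C) (n : ℕ) :
    φ (v ^ (3 * N) * u ^ n) A = 0 ∧ φ ((u + v) ^ (3 * N) * v ^ n) B = 0 := by
  have hBAC : B = A + C := by rw [hABC, sub_add_cancel]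
  have hCBA : C = B - A := by rw [hABC, sub_sub_cancel]
  constructor
  · -- first claim
    have e1 : v ^ (3 * N) * u ^ n = ∑ j ∈ range (3 * N + 1),
        ((-1) ^ j * ((3 * N).choose j) : ℤ) • ((u + v) ^ (3 * N - j) * u ^ j * u ^ n) := by
      conv_lhs => rw [← add_sub_cancel_left u v]
      rw [aux_zsub_pow (u + v) u (3 * N), Finset.sum_mul]
      exact Finset.sum_congr rfl fun j hj => smul_mul_assoc _ _ _
    rw [e1, phi_sum]
    refine Finset.sum_eq_zero fun j hj => ?_
    rw [Finset.mem_range] at hj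
    rw [phi_zsmul]
    suffices h : φ ((u + v) ^ (3 * N - j) * u ^ j * u ^ n) A = 0 by rw [h, smul_zero]
    rcases le_or_gt N (j + n) with hle | hlt
    · have e2 : (u + v) ^ (3 * N - j) * u ^ j * u ^ n
          = ((u + v) ^ (3 * N - j) * u ^ (j + n - N)) * u ^ N := by
        calc (u + v) ^ (3 * N - j) * u ^ j * u ^ n
            = (u + v) ^ (3 * N - j) * u ^ (j + n) := by rw [mul_assoc, ← pow_add]
          _ = _ := by rw [pow_extract u hle]; ring
      rw [e2]; exact phi_kill φ _ _ _ hA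
    · have e3 : 3 * N - j = N + (2 * N - j) := by omega
      rw [hABC, map_sub]
      have hCpart : φ ((u + v) ^ (3 * N - j) * u ^ j * u ^ n) C = 0 := by
        have e4 : (u + v) ^ (3 * N - j) * u ^ j * u ^ n
            = ((u + v) ^ (2 * N - j) * u ^ j * u ^ n) * (u + v) ^ N := by
          rw [e3, pow_add]; ring
        rw [e4]; exact phi_kill φ _ _ _ hC
      have hBpart : φ ((u + v) ^ (3 * N - j) * u ^ j * u ^ n) B = 0 := by
        have e5 : (u + v) ^ (3 * N - j) * u ^ j * u ^ n
            = ∑ i ∈ range (2 * N - j + 1), (((2 * N - j).choose i : ℤ)) •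
                ((u + v) ^ N * (u ^ (2 * N - j - i) * v ^ i) * (u ^ j * u ^ n)) := by
          rw [e3, pow_add, aux_zadd_pow u v (2 * N - j), Finset.mul_sum, Finset.sum_mul,
            Finset.sum_mul]
          refine Finset.sum_congr rfl fun i hi => ?_
          rw [mul_smul_comm, smul_mul_assoc, smul_mul_assoc]
          congr 1
          ring
        rw [e5, phi_sum]
        refine Finset.sum_eq_zero fun i hi => ?_
        rw [Finset.mem_range] at hi
        rw [phi_zsmul]
        suffices h : φ ((u + v) ^ N * (u ^ (2 * N - j - i) * v ^ i) * (u ^ j * u ^ n)) B = 0 by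
          rw [h, smul_zero]
        rcases le_or_gt N i with hile | hilt
        · have e6 : (u + v) ^ N * (u ^ (2 * N - j - i) * v ^ i) * (u ^ j * u ^ n)
              = ((u + v) ^ N * u ^ (2 * N - j - i) * v ^ (i - N) * (u ^ j * u ^ n)) * v ^ N := by
            rw [pow_extract v hile]; ring
          rw [e6]; exact phi_kill φ _ _ _ hB
        · have hNle : N ≤ 2 * N - j - i + (j + n) := by omega
          rw [hBAC, map_add]
          have hApart : φ ((u + v) ^ N * (u ^ (2 * N - j - i) * v ^ i) * (u ^ j * u ^ n)) A
              = 0 := by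
            have e7 : (u + v) ^ N * (u ^ (2 * N - j - i) * v ^ i) * (u ^ j * u ^ n)
                = ((u + v) ^ N * v ^ i * u ^ (2 * N - j - i + (j + n) - N)) * u ^ N := by
              calc (u + v) ^ N * (u ^ (2 * N - j - i) * v ^ i) * (u ^ j * u ^ n)
                  = (u + v) ^ N * v ^ i * u ^ (2 * N - j - i + (j + n)) := by
                    rw [pow_add u (2 * N - j - i) (j + n), pow_add u j n]; ring
                _ = _ := by rw [pow_extract u hNle]; ring
            rw [e7]; exact phi_kill φ _ _ _ hA
          have hCpart2 : φ ((u + v) ^ N * (u ^ (2 * N - j - i) * v ^ i) * (u ^ j * u ^ n)) C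
              = 0 := by
            have e8 : (u + v) ^ N * (u ^ (2 * N - j - i) * v ^ i) * (u ^ j * u ^ n)
                = (u ^ (2 * N - j - i) * v ^ i * (u ^ j * u ^ n)) * (u + v) ^ N := by ring
            rw [e8]; exact phi_kill φ _ _ _ hC
          rw [hApart, hCpart2, add_zero]
      rw [hBpart, hCpart, sub_zero]
  · -- second claim
    have e1 : (u + v) ^ (3 * N) * v ^ n = ∑ j ∈ range (3 * N + 1),
        (((3 * N).choose j) : ℤ) • (u ^ (3 * N - j) * v ^ j * v ^ n) := by
      rw [aux_zadd_pow u v (3 * N), Finset.sum_mul]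
      exact Finset.sum_congr rfl fun j hj => smul_mul_assoc _ _ _
    rw [e1, phi_sum]
    refine Finset.sum_eq_zero fun j hj => ?_
    rw [Finset.mem_range] at hj
    rw [phi_zsmul]
    suffices h : φ (u ^ (3 * N - j) * v ^ j * v ^ n) B = 0 by rw [h, smul_zero]
    rcases le_or_gt N (j + n) with hle | hlt
    · have e2 : u ^ (3 * N - j) * v ^ j * v ^ n
          = (u ^ (3 * N - j) * v ^ (j + n - N)) * v ^ N := by
        calc u ^ (3 * N - j) * v ^ j * v ^ n
            = u ^ (3 * N - j) * v ^ (j + n) := by rw [mul_assoc, ← pow_add]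
          _ = _ := by rw [pow_extract v hle]; ring
      rw [e2]; exact phi_kill φ _ _ _ hB
    · have e3 : 3 * N - j = N + (2 * N - j) := by omega
      rw [hBAC, map_add]
      have hApart : φ (u ^ (3 * N - j) * v ^ j * v ^ n) A = 0 := by
        have e4 : u ^ (3 * N - j) * v ^ j * v ^ n
            = (u ^ (2 * N - j) * v ^ j * v ^ n) * u ^ N := by
          rw [e3, pow_add]; ring
        rw [e4]; exact phi_kill φ _ _ _ hA
      have hCpart : φ (u ^ (3 * N - j) * v ^ j * v ^ n) C = 0 := by
        have e5 : u ^ (3 * N - j) * v ^ j * v ^ n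
            = ∑ i ∈ range (2 * N - j + 1), ((-1) ^ i * ((2 * N - j).choose i) : ℤ) •
                (u ^ N * ((u + v) ^ (2 * N - j - i) * v ^ i) * (v ^ j * v ^ n)) := by
          have hu : u ^ (2 * N - j) = ((u + v) - v) ^ (2 * N - j) := by
            rw [add_sub_cancel_right]
          rw [e3, pow_add, hu, aux_zsub_pow (u + v) v (2 * N - j), Finset.mul_sum,
            Finset.sum_mul, Finset.sum_mul]
          refine Finset.sum_congr rfl fun i hi => ?_
          rw [mul_smul_comm, smul_mul_assoc, smul_mul_assoc]
          congr 1
          ring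
        rw [e5, phi_sum]
        refine Finset.sum_eq_zero fun i hi => ?_
        rw [Finset.mem_range] at hi
        rw [phi_zsmul]
        suffices h : φ (u ^ N * ((u + v) ^ (2 * N - j - i) * v ^ i) * (v ^ j * v ^ n)) C = 0 by
          rw [h, smul_zero]
        rcases le_or_gt N (2 * N - j - i) with hile | hilt
        · have e6 : u ^ N * ((u + v) ^ (2 * N - j - i) * v ^ i) * (v ^ j * v ^ n)
              = (u ^ N * (u + v) ^ (2 * N - j - i - N) * v ^ i * (v ^ j * v ^ n))
                  * (u + v) ^ N := by
            rw [pow_extract (u + v) hile]; ring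
          rw [e6]; exact phi_kill φ _ _ _ hC
        · have hNle : N ≤ i + (j + n) := by omega
          rw [hCBA, map_sub]
          have hBpart : φ (u ^ N * ((u + v) ^ (2 * N - j - i) * v ^ i) * (v ^ j * v ^ n)) B
              = 0 := by
            have e7 : u ^ N * ((u + v) ^ (2 * N - j - i) * v ^ i) * (v ^ j * v ^ n)
                = (u ^ N * (u + v) ^ (2 * N - j - i) * v ^ (i + (j + n) - N)) * v ^ N := by
              calc u ^ N * ((u + v) ^ (2 * N - j - i) * v ^ i) * (v ^ j * v ^ n)
                  = u ^ N * (u + v) ^ (2 * N - j - i) * v ^ (i + (j + n)) := by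
                    rw [pow_add v i (j + n), pow_add v j n]; ring
                _ = _ := by rw [pow_extract v hNle]; ring
            rw [e7]; exact phi_kill φ _ _ _ hB
          have hApart2 : φ (u ^ N * ((u + v) ^ (2 * N - j - i) * v ^ i) * (v ^ j * v ^ n)) A
              = 0 := by
            have e8 : u ^ N * ((u + v) ^ (2 * N - j - i) * v ^ i) * (v ^ j * v ^ n)
                = ((u + v) ^ (2 * N - j - i) * v ^ i * (v ^ j * v ^ n)) * u ^ N := by ring
            rw [e8]; exact phi_kill φ _ _ _ hA
          rw [hBpart, hApart2, sub_zero]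
      rw [hApart, hCpart, add_zero]

/-! ### Shift operators on triple-indexed families -/

section ShiftLayer

variable {V : Type*} [AddCommGroup V]

/-- Shift endomorphism of triple-indexed families. -/
def shE (g : ℤ × ℤ × ℤ) : AddMonoid.End (ℤ → ℤ → ℤ → V) where
  toFun D := fun p q r => D (p + g.1) (q + g.2.1) (r + g.2.2)
  map_zero' := rfl
  map_add' _ _ := rfl

/-- Shifts as a monoid homomorphism. -/
def shM : Multiplicative (ℤ × ℤ × ℤ) →* AddMonoid.End (ℤ → ℤ → ℤ → V) where
  toFun g := shE g.toAdd
  map_one' := by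
    apply AddMonoidHom.ext; intro D; funext p q r
    show D (p + 0) (q + 0) (r + 0) = D p q r
    simp
  map_mul' g h := by
    apply AddMonoidHom.ext; intro D; funext p q r
    show D _ _ _ = D _ _ _
    simp [add_assoc]

/-- The action of the group algebra of `ℤ³` on triple-indexed families. -/
noncomputable def PhiE : AddMonoidAlgebra ℤ (ℤ × ℤ × ℤ) →+* AddMonoid.End (ℤ → ℤ → ℤ → V) :=
  ((AddMonoidAlgebra.lift ℤ (AddMonoid.End (ℤ → ℤ → ℤ → V)) (ℤ × ℤ × ℤ)) shM).toRingHom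

theorem PhiE_single (g : ℤ × ℤ × ℤ) :
    PhiE (V := V) (AddMonoidAlgebra.single g 1) = shE g := by
  simp [PhiE, AddMonoidAlgebra.lift_single]
  rfl

theorem PhiE_sub_pow_fun (g h : ℤ × ℤ × ℤ) (N : ℕ) (D : ℤ → ℤ → ℤ → V) :
    PhiE ((AddMonoidAlgebra.single g (1 : ℤ) - AddMonoidAlgebra.single h 1) ^ N) D
    = ∑ s ∈ range (N + 1), ((-1) ^ s * (N.choose s) : ℤ) •
        shE ((N - s) • g + s • h) D := by
  rw [aux_zsub_pow (AddMonoidAlgebra.single g (1 : ℤ)) (AddMonoidAlgebra.single h 1) N]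
  refine (phi_sum _ _ _ D).trans ?_
  refine Finset.sum_congr rfl fun s hs => ?_
  refine (phi_zsmul _ _ _ D).trans ?_
  congr 1
  rw [AddMonoidAlgebra.single_pow, AddMonoidAlgebra.single_pow, one_pow, one_pow,
    AddMonoidAlgebra.single_mul_single, one_mul, PhiE_single]

theorem PhiE_sub_pow_apply (g h : ℤ × ℤ × ℤ) (N : ℕ) (D : ℤ → ℤ → ℤ → V) (p q r : ℤ) :
    PhiE ((AddMonoidAlgebra.single g (1 : ℤ) - AddMonoidAlgebra.single h 1) ^ N) D p q r
    = ∑ s ∈ range (N + 1), ((-1) ^ s * (N.choose s) : ℤ) •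
        D (p + ((N - s) • g + s • h).1) (q + ((N - s) • g + s • h).2.1)
          (r + ((N - s) • g + s • h).2.2) := by
  rw [PhiE_sub_pow_fun]
  rw [Finset.sum_apply, Finset.sum_apply, Finset.sum_apply]
  refine Finset.sum_congr rfl fun s hs => ?_
  rw [Pi.smul_apply, Pi.smul_apply, Pi.smul_apply]
  rfl

theorem PhiE_U_apply (N : ℕ) (D : ℤ → ℤ → ℤ → V) (p q r : ℤ) :
    PhiE ((AddMonoidAlgebra.single ((1 : ℤ), (0 : ℤ), (0 : ℤ)) (1 : ℤ)
        - AddMonoidAlgebra.single ((0 : ℤ), (1 : ℤ), (0 : ℤ)) 1) ^ N) D p q r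
    = ∑ s ∈ range (N + 1), ((-1) ^ s * (N.choose s) : ℤ) • D (p + N - s) (q + s) r := by
  rw [PhiE_sub_pow_apply]
  refine Finset.sum_congr rfl fun s hs => ?_
  rw [Finset.mem_range] at hs
  have e1 : p + ((N - s) • ((1 : ℤ), (0 : ℤ), (0 : ℤ)) + s • ((0 : ℤ), (1 : ℤ), (0 : ℤ))).1
      = p + N - s := by simp; omega
  have e2 : q + ((N - s) • ((1 : ℤ), (0 : ℤ), (0 : ℤ)) + s • ((0 : ℤ), (1 : ℤ), (0 : ℤ))).2.1
      = q + s := by simp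
  have e3 : r + ((N - s) • ((1 : ℤ), (0 : ℤ), (0 : ℤ)) + s • ((0 : ℤ), (1 : ℤ), (0 : ℤ))).2.2
      = r := by simp
  rw [e1, e2, e3]

theorem PhiE_V_apply (N : ℕ) (D : ℤ → ℤ → ℤ → V) (p q r : ℤ) :
    PhiE ((AddMonoidAlgebra.single ((0 : ℤ), (1 : ℤ), (0 : ℤ)) (1 : ℤ)
        - AddMonoidAlgebra.single ((0 : ℤ), (0 : ℤ), (1 : ℤ)) 1) ^ N) D p q r
    = ∑ s ∈ range (N + 1), ((-1) ^ s * (N.choose s) : ℤ) • D p (q + N - s) (r + s) := by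
  rw [PhiE_sub_pow_apply]
  refine Finset.sum_congr rfl fun s hs => ?_
  rw [Finset.mem_range] at hs
  have e1 : p + ((N - s) • ((0 : ℤ), (1 : ℤ), (0 : ℤ)) + s • ((0 : ℤ), (0 : ℤ), (1 : ℤ))).1
      = p := by simp
  have e2 : q + ((N - s) • ((0 : ℤ), (1 : ℤ), (0 : ℤ)) + s • ((0 : ℤ), (0 : ℤ), (1 : ℤ))).2.1
      = q + N - s := by simp; omega
  have e3 : r + ((N - s) • ((0 : ℤ), (1 : ℤ), (0 : ℤ)) + s • ((0 : ℤ), (0 : ℤ), (1 : ℤ))).2.2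
      = r + s := by simp
  rw [e1, e2, e3]

theorem PhiE_W_apply (N : ℕ) (D : ℤ → ℤ → ℤ → V) (p q r : ℤ) :
    PhiE (((AddMonoidAlgebra.single ((1 : ℤ), (0 : ℤ), (0 : ℤ)) (1 : ℤ)
          - AddMonoidAlgebra.single ((0 : ℤ), (1 : ℤ), (0 : ℤ)) 1)
        + (AddMonoidAlgebra.single ((0 : ℤ), (1 : ℤ), (0 : ℤ)) (1 : ℤ)
          - AddMonoidAlgebra.single ((0 : ℤ), (0 : ℤ), (1 : ℤ)) 1)) ^ N) D p q r
    = ∑ s ∈ range (N + 1), ((-1) ^ s * (N.choose s) : ℤ) • D (p + N - s) q (r + s) := by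
  rw [show (AddMonoidAlgebra.single ((1 : ℤ), (0 : ℤ), (0 : ℤ)) (1 : ℤ)
          - AddMonoidAlgebra.single ((0 : ℤ), (1 : ℤ), (0 : ℤ)) 1)
        + (AddMonoidAlgebra.single ((0 : ℤ), (1 : ℤ), (0 : ℤ)) (1 : ℤ)
          - AddMonoidAlgebra.single ((0 : ℤ), (0 : ℤ), (1 : ℤ)) 1)
      = AddMonoidAlgebra.single ((1 : ℤ), (0 : ℤ), (0 : ℤ)) (1 : ℤ)
          - AddMonoidAlgebra.single ((0 : ℤ), (0 : ℤ), (1 : ℤ)) 1 by ring]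
  rw [PhiE_sub_pow_apply]
  refine Finset.sum_congr rfl fun s hs => ?_
  rw [Finset.mem_range] at hs
  have e1 : p + ((N - s) • ((1 : ℤ), (0 : ℤ), (0 : ℤ)) + s • ((0 : ℤ), (0 : ℤ), (1 : ℤ))).1
      = p + N - s := by simp; omega
  have e2 : q + ((N - s) • ((1 : ℤ), (0 : ℤ), (0 : ℤ)) + s • ((0 : ℤ), (0 : ℤ), (1 : ℤ))).2.1
      = q := by simp
  have e3 : r + ((N - s) • ((1 : ℤ), (0 : ℤ), (0 : ℤ)) + s • ((0 : ℤ), (0 : ℤ), (1 : ℤ))).2.2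
      = r + s := by simp
  rw [e1, e2, e3]

end ShiftLayer

variable {k L : Type*} [Field k] [CharZero k] [AddCommGroup L] [Module k L]

/-- `Σ_{s=0}^{N} (−1)^s C(N,s) [x_{n−s}, y_{m+s}]`. -/
def locSum (br : L →ₗ[k] L →ₗ[k] L) (x y : ℤ → L) (N : ℕ) (n m : ℤ) : L :=
  ∑ s ∈ Finset.range (N + 1),
    ((-1) ^ s * (N.choose s) : ℤ) • br (x (n - (s : ℤ))) (y (m + (s : ℤ)))

/-- The pair of formal distributions `(x(z), y(z))` over the Leibniz algebra is local. -/
def IsLocalPair (br : L →ₗ[k] L →ₗ[k] L) (x y : ℤ → L) : Prop :=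
  ∃ N : ℕ, ∀ n m : ℤ, locSum br x y N n m = 0

/-- The `n`-th product `(a₍ₙ₎b)ₘ = Σ_{s≥0} (−1)^s C(n,s) [a_{n−s}, b_{m+s}]`. -/
def nProd (br : L →ₗ[k] L →ₗ[k] L) (a b : ℤ → L) (n : ℕ) : ℤ → L :=
  fun m => locSum br a b n (n : ℤ) m

/-- Let `L` be a Leibniz algebra and `a(z), b(z), c(z)` pairwise mutually local formal
distributions over `L`. Then for every `n ∈ ℤ₊` the pairs `((a₍ₙ₎b)(z), c(z))` and
`(a(z), (b₍ₙ₎c)(z))` are local. -/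
theorem stmt_14 (br : L →ₗ[k] L →ₗ[k] L)
    (leib : ∀ x y z : L, br x (br y z) - br y (br x z) = br (br x y) z)
    (a b c : ℤ → L)
    (hab : IsLocalPair br a b) (hba : IsLocalPair br b a)
    (hac : IsLocalPair br a c) (hca : IsLocalPair br c a)
    (hbc : IsLocalPair br b c) (hcb : IsLocalPair br c b) :
    ∀ n : ℕ, IsLocalPair br (nProd br a b n) c ∧ IsLocalPair br a (nProd br b c n) := by
  intro n
  obtain ⟨N₁, h₁⟩ := hab
  obtain ⟨N₂, h₂⟩ := hac
  obtain ⟨N₃, h₃⟩ := hbc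
  set A : ℤ → ℤ → ℤ → L := fun p q r => br (br (a p) (b q)) (c r) with hAdef
  set B : ℤ → ℤ → ℤ → L := fun p q r => br (a p) (br (b q) (c r)) with hBdef
  set C : ℤ → ℤ → ℤ → L := fun p q r => br (b q) (br (a p) (c r)) with hCdef
  set u : AddMonoidAlgebra ℤ (ℤ × ℤ × ℤ) :=
    AddMonoidAlgebra.single ((1 : ℤ), (0 : ℤ), (0 : ℤ)) (1 : ℤ)
      - AddMonoidAlgebra.single ((0 : ℤ), (1 : ℤ), (0 : ℤ)) 1 with hudef
  set v : AddMonoidAlgebra ℤ (ℤ × ℤ × ℤ) :=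
    AddMonoidAlgebra.single ((0 : ℤ), (1 : ℤ), (0 : ℤ)) (1 : ℤ)
      - AddMonoidAlgebra.single ((0 : ℤ), (0 : ℤ), (1 : ℤ)) 1 with hvdef
  have hABC : A = B - C := by
    funext p q r
    show A p q r = B p q r - C p q r
    simp only [hAdef, hBdef, hCdef]
    exact (leib _ _ _).symm
  -- convert the locality hypotheses
  have hUA : PhiE (u ^ N₁) A = 0 := by
    funext p q r
    show PhiE (u ^ N₁) A p q r = (0 : L)
    rw [hudef, PhiE_U_apply]
    have e : (∑ s ∈ range (N₁ + 1), ((-1) ^ s * (N₁.choose s) : ℤ) •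
          A (p + N₁ - s) (q + s) r)
        = (br.flip (c r)) (locSum br a b N₁ (p + (N₁ : ℤ)) q) := by
      simp only [locSum, map_sum, map_zsmul, LinearMap.flip_apply, hAdef]
    rw [e, h₁, map_zero]
  have hVB : PhiE (v ^ N₃) B = 0 := by
    funext p q r
    show PhiE (v ^ N₃) B p q r = (0 : L)
    rw [hvdef, PhiE_V_apply]
    have e : (∑ s ∈ range (N₃ + 1), ((-1) ^ s * (N₃.choose s) : ℤ) •
          B p (q + N₃ - s) (r + s))
        = (br (a p)) (locSum br b c N₃ (q + (N₃ : ℤ)) r) := by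
      simp only [locSum, map_sum, map_zsmul, hBdef]
    rw [e, h₃, map_zero]
  have hWC : PhiE ((u + v) ^ N₂) C = 0 := by
    funext p q r
    show PhiE ((u + v) ^ N₂) C p q r = (0 : L)
    rw [hudef, hvdef, PhiE_W_apply]
    have e : (∑ s ∈ range (N₂ + 1), ((-1) ^ s * (N₂.choose s) : ℤ) •
          C (p + N₂ - s) q (r + s))
        = (br (b q)) (locSum br a c N₂ (p + (N₂ : ℤ)) r) := by
      simp only [locSum, map_sum, map_zsmul, hCdef]
    rw [e, h₂, map_zero]
  -- pass to a common locality order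
  set Nm : ℕ := max N₁ (max N₂ N₃) with hNm
  have hA' : PhiE (u ^ Nm) A = 0 := by
    have h := phi_kill PhiE (u ^ (Nm - N₁)) (u ^ N₁) A hUA
    rwa [← pow_extract u (le_max_left _ _)] at h
  have hB' : PhiE (v ^ Nm) B = 0 := by
    have h := phi_kill PhiE (v ^ (Nm - N₃)) (v ^ N₃) B hVB
    rwa [← pow_extract v (le_max_of_le_right (le_max_right _ _))] at h
  have hC' : PhiE ((u + v) ^ Nm) C = 0 := by
    have h := phi_kill PhiE ((u + v) ^ (Nm - N₂)) ((u + v) ^ N₂) C hWC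
    rwa [← pow_extract (u + v) (le_max_of_le_right (le_max_left _ _))] at h
  obtain ⟨main1, main2⟩ := dong_core PhiE u v Nm A B C hA' hB' hC' hABC n
  constructor
  · refine ⟨3 * Nm, fun p m => ?_⟩
    have hmul : PhiE (v ^ (3 * Nm) * u ^ n) A
        = PhiE (v ^ (3 * Nm)) (PhiE (u ^ n) A) := by rw [map_mul]; rfl
    have key : locSum br (nProd br a b n) c (3 * Nm) p m
        = PhiE (v ^ (3 * Nm) * u ^ n) A 0 (p - ((3 * Nm : ℕ) : ℤ)) m := by
      rw [hmul, hvdef, PhiE_V_apply]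
      simp only [locSum, nProd]
      refine Finset.sum_congr rfl fun t ht => ?_
      rw [hudef, PhiE_U_apply]
      congr 1
      simp only [map_sum, map_zsmul, LinearMap.sum_apply, LinearMap.smul_apply]
      refine Finset.sum_congr rfl fun s hs => ?_
      congr 1
      rw [show (0 : ℤ) + (n : ℤ) - (s : ℤ) = (n : ℤ) - (s : ℤ) by omega]
      rw [show p - ((3 * Nm : ℕ) : ℤ) + ((3 * Nm : ℕ) : ℤ) - (t : ℤ) + (s : ℤ)
          = p - (t : ℤ) + (s : ℤ) by omega]
    rw [key, main1]
    rfl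
  · refine ⟨3 * Nm, fun p m => ?_⟩
    have hmul : PhiE ((u + v) ^ (3 * Nm) * v ^ n) B
        = PhiE ((u + v) ^ (3 * Nm)) (PhiE (v ^ n) B) := by rw [map_mul]; rfl
    have key : locSum br a (nProd br b c n) (3 * Nm) p m
        = PhiE ((u + v) ^ (3 * Nm) * v ^ n) B (p - ((3 * Nm : ℕ) : ℤ)) 0 m := by
      rw [hmul, hudef, hvdef, PhiE_W_apply]
      simp only [locSum, nProd]
      refine Finset.sum_congr rfl fun t ht => ?_
      rw [PhiE_V_apply]
      congr 1
      simp only [map_sum, map_zsmul]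
      refine Finset.sum_congr rfl fun s hs => ?_
      congr 1
      rw [show (0 : ℤ) + (n : ℤ) - (s : ℤ) = (n : ℤ) - (s : ℤ) by omega]
      rw [show p - ((3 * Nm : ℕ) : ℤ) + ((3 * Nm : ℕ) : ℤ) - (t : ℤ) = p - (t : ℤ) by omega]
    rw [key, main2]
    rfl
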